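/- Key-guessing eavesdropper attack: Let 𝒳, 𝒲, 𝒵 be finite alphabets, d_L : 𝒳×𝒲 → [0,∞), d_E : 𝒳×𝒵 → [0,∞) distortion measures such that for every w ∈ 𝒲^n there exists z ∈ 𝒵^n with d_E(x,z) ≤ d_L(x,w) for all x ∈ 𝒳^n, and let 0 ≤ Dc ≤ D. Let 𝒴 be a finite set, k ≥ 0, f : 𝒳^n × {0,1}^k → 𝒴 any encoder, φ : 𝒴 × {0,1}^k → 𝒲^n any decoder, X any 𝒳^n-valued random variable, and U uniform on {0,1}^k independent of X. Then there exists an eavesdropper σ : 𝒴 → 𝒵^n such that P[ d_E(X, σ(f(X,U))) ≤ D ] ≥ 2^{−k} · P[ d_L(X, φ(f(X,U), U)) ≤ Dc ]. -/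

import Mathlib

open scoped BigOperators

noncomputable section

open Classical in
/-- Indicator of a proposition, as a real number. -/
def ind (p : Prop) : ℝ := if p then 1 else 0

/-- Average per-letter distortion between sequences. -/
def seqDist {A B : Type*} (d : A → B → ℝ) {n : ℕ} (x : Fin n → A) (z : Fin n → B) : ℝ :=
  (n : ℝ)⁻¹ * ∑ i, d (x i) (z i)

/-- `p` is a probability distribution on a finite alphabet. -/
def IsDist {A : Type*} [Fintype A] (p : A → ℝ) : Prop :=
  (∀ a, 0 ≤ p a) ∧ ∑ a, p a = 1

/-- **Key-guessing eavesdropper attack.** If `d_E` is more lenient than `d_L` at blocklength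
`n` and `Dc ≤ D`, then for any encoder `f`, decoder `φ`, source `X` and an independent uniform
key `U` of `k` bits, there is an eavesdropper `σ` with
`P[d_E(X,σ(f(X,U))) ≤ D] ≥ 2^{−k}·P[d_L(X,φ(f(X,U),U)) ≤ Dc]`. -/
theorem key_guessing_attack
    {𝓧 𝓦 𝓩 : Type*} [Fintype 𝓧] [Fintype 𝓦] [Fintype 𝓩] {n : ℕ}
    (dL : 𝓧 → 𝓦 → ℝ) (dE : 𝓧 → 𝓩 → ℝ)
    (hlenient : ∀ w : Fin n → 𝓦, ∃ z : Fin n → 𝓩, ∀ x : Fin n → 𝓧,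
      seqDist dE x z ≤ seqDist dL x w)
    (Dc D : ℝ) (hDc : 0 ≤ Dc) (hD : Dc ≤ D)
    (𝓨 : Type*) [Fintype 𝓨] (k : ℕ)
    (f : (Fin n → 𝓧) → (Fin k → Bool) → 𝓨)
    (φ : 𝓨 → (Fin k → Bool) → (Fin n → 𝓦))
    (p : (Fin n → 𝓧) → ℝ) (hp : IsDist p) :
    ∃ σ : 𝓨 → (Fin n → 𝓩),
      ((2 : ℝ) ^ k)⁻¹ *
          (((2 : ℝ) ^ k)⁻¹ * ∑ u : Fin k → Bool, ∑ x : Fin n → 𝓧,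
            p x * ind (seqDist dL x (φ (f x u) u) ≤ Dc))
        ≤ ((2 : ℝ) ^ k)⁻¹ * ∑ u : Fin k → Bool, ∑ x : Fin n → 𝓧,
            p x * ind (seqDist dE x (σ (f x u)) ≤ D) := by
  classical
  choose Z hZ using hlenient
  set N : ℝ := (2 : ℝ) ^ k with hN
  have hNinv : (0 : ℝ) ≤ N⁻¹ := by positivity
  -- nonnegativity of all terms
  have hnn : ∀ (q : Prop) (x : Fin n → 𝓧), 0 ≤ p x * ind q := by
    intro q x
    have := hp.1 x
    unfold ind; split <;> simp [this]
  set S : (Fin k → Bool) → ℝ :=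
    fun u => ∑ x : Fin n → 𝓧, p x * ind (seqDist dL x (φ (f x u) u) ≤ Dc) with hS
  set F : (Fin k → Bool) → ℝ :=
    fun u' => N⁻¹ * ∑ u : Fin k → Bool, ∑ x : Fin n → 𝓧,
      p x * ind (seqDist dE x (Z (φ (f x u) u')) ≤ D) with hF
  -- key pointwise bound : N⁻¹ * S u' ≤ F u'
  have key : ∀ u' : Fin k → Bool, N⁻¹ * S u' ≤ F u' := by
    intro u'
    apply mul_le_mul_of_nonneg_left _ hNinv
    have h1 : S u' ≤ ∑ x : Fin n → 𝓧,
        p x * ind (seqDist dE x (Z (φ (f x u') u')) ≤ D) := by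
      apply Finset.sum_le_sum
      intro x _
      have hpx := hp.1 x
      by_cases h : seqDist dL x (φ (f x u') u') ≤ Dc
      · have h2 : seqDist dE x (Z (φ (f x u') u')) ≤ D :=
          le_trans (hZ _ x) (le_trans h hD)
        simp [ind, h, h2]
      · simp only [ind, h, if_false, mul_zero]
        positivity
    refine le_trans h1 ?_
    exact Finset.single_le_sum (f := fun u => ∑ x : Fin n → 𝓧,
      p x * ind (seqDist dE x (Z (φ (f x u) u')) ≤ D))
      (fun u _ => Finset.sum_nonneg fun x _ => hnn _ x) (Finset.mem_univ u')
  -- averaging argument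
  set c : ℝ := N⁻¹ * (N⁻¹ * ∑ u : Fin k → Bool, S u) with hc
  have hcard : (Finset.univ : Finset (Fin k → Bool)).card = 2 ^ k := by
    simp [Finset.card_univ]
  have hsum : ∑ _u' : Fin k → Bool, c ≤ ∑ u' : Fin k → Bool, F u' := by
    have h1 : ∑ _u' : Fin k → Bool, c = N * c := by
      rw [Finset.sum_const, hcard, nsmul_eq_mul, hN]
      push_cast
      ring
    have h2 : N * c = N⁻¹ * ∑ u : Fin k → Bool, S u := by
      rw [hc, hN]
      have : ((2 : ℝ) ^ k) ≠ 0 := by positivity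
      field_simp
    rw [h1, h2, Finset.mul_sum]
    exact Finset.sum_le_sum fun u' _ => key u'
  obtain ⟨u', _, hu'⟩ := Finset.exists_le_of_sum_le ⟨default, Finset.mem_univ _⟩ hsum
  exact ⟨fun y => Z (φ y u'), hu'⟩

end
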